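/- Let C be a subgroup of G = Z2^{k1} × Z4^{k2} × Q8^{k3} whose Gray image Φ(C) is a Hadamard binary code of length n = k1 + 2k2 + 4k3 > 4 (every nonidentity element of C has Gray image of weight n/2 or n). If a, b, c ∈ C all have order 4, b^2 = c^2 = [b, c], and [a, b] = [a, c] = e, then (ab)^2 = (ac)^2 = u and none of a^2, b^2, c^2 equals u, where u is the unique element of G whose Gray image is the all-ones vector. -/

import Mathlib

/-- The group G = Z2^{k1} × Z4^{k2} × Q8^{k3}. -/
abbrev Gq (k1 k2 k3 : ℕ) : Type :=
  (Fin k1 → Multiplicative (ZMod 2)) × (Fin k2 → Multiplicative (ZMod 4)) ×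
    (Fin k3 → QuaternionGroup 2)

/-- The Gray map Φ : Q8 → Z2⁴ : 1 ↦ 0000, a ↦ 0101, a² ↦ 1111, a³ ↦ 1010,
b ↦ 0110, a³b ↦ 0011, a²b ↦ 1001, ab ↦ 1100 (here b = xa 0, so ab = xa 3, etc.). -/
def grayQ8 : QuaternionGroup 2 → Fin 4 → ZMod 2
  | QuaternionGroup.a i =>
      if i = 0 then ![0, 0, 0, 0] else if i = 1 then ![0, 1, 0, 1]
      else if i = 2 then ![1, 1, 1, 1] else ![1, 0, 1, 0]
  | QuaternionGroup.xa i =>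
      if i = 0 then ![0, 1, 1, 0] else if i = 1 then ![0, 0, 1, 1]
      else if i = 2 then ![1, 0, 0, 1] else ![1, 1, 0, 0]

/-- The Gray map φ : Z4 → Z2² : 0 ↦ 00, 1 ↦ 01, 2 ↦ 11, 3 ↦ 10. -/
def grayZ4 : ZMod 4 → Fin 2 → ZMod 2 := fun x =>
  if x = 0 then ![0, 0] else if x = 1 then ![0, 1] else if x = 2 then ![1, 1] else ![1, 0]

/-- The componentwise Gray map on G = Z2^{k1} × Z4^{k2} × Q8^{k3}. -/
def grayG {k1 k2 k3 : ℕ} (x : Gq k1 k2 k3) :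
    (Fin k1 → ZMod 2) × (Fin k2 → Fin 2 → ZMod 2) × (Fin k3 → Fin 4 → ZMod 2) :=
  (fun i => Multiplicative.toAdd (x.1 i),
   fun j => grayZ4 (Multiplicative.toAdd (x.2.1 j)),
   fun j => grayQ8 (x.2.2 j))

/-- Hamming weight of the Gray image of an element of G. -/
def wtG {k1 k2 k3 : ℕ} (x : Gq k1 k2 k3) : ℕ :=
  (Finset.univ.filter fun i => (grayG x).1 i ≠ 0).card
    + ∑ j : Fin k2, (Finset.univ.filter fun b => (grayG x).2.1 j b ≠ 0).card
    + ∑ j : Fin k3, (Finset.univ.filter fun b => (grayG x).2.2 j b ≠ 0).card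

/-- The element u of G whose Gray image is the all-ones vector. -/
def uG (k1 k2 k3 : ℕ) : Gq k1 k2 k3 :=
  (fun _ => Multiplicative.ofAdd (1 : ZMod 2),
   fun _ => Multiplicative.ofAdd (2 : ZMod 4),
   fun _ => QuaternionGroup.a 2)

open scoped commutatorElement

/-! ### Auxiliary definitions and lemmas -/

private def wtw2 (z : Multiplicative (ZMod 2)) : ℕ :=
  if Multiplicative.toAdd z ≠ 0 then 1 else 0

private def wtw4 (z : Multiplicative (ZMod 4)) : ℕ :=
  (Finset.univ.filter fun b => grayZ4 (Multiplicative.toAdd z) b ≠ 0).card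

private def wtw8 (q : QuaternionGroup 2) : ℕ :=
  (Finset.univ.filter fun b => grayQ8 q b ≠ 0).card

private lemma wtG_eq {k1 k2 k3 : ℕ} (x : Gq k1 k2 k3) :
    wtG x = (∑ i, wtw2 (x.1 i)) + (∑ j, wtw4 (x.2.1 j)) + (∑ j, wtw8 (x.2.2 j)) := by
  simp only [wtG, grayG, wtw4, wtw8]
  congr 2
  simp [wtw2, Finset.card_filter]

private lemma lem2 : ∀ A B : Multiplicative (ZMod 2),
    wtw2 ((A * B) ^ 2) = wtw2 (A ^ 2) + wtw2 (B ^ 2) := by decide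

private lemma lem4 : ∀ A B C : Multiplicative (ZMod 4), B ^ 2 = ⁅B, C⁆ →
    wtw4 ((A * B) ^ 2) = wtw4 (A ^ 2) + wtw4 (B ^ 2) := by decide

private lemma lem8 : ∀ A B C : QuaternionGroup 2, B ^ 2 = C ^ 2 → B ^ 2 = ⁅B, C⁆ →
    ⁅A, B⁆ = 1 → ⁅A, C⁆ = 1 → wtw8 ((A * B) ^ 2) = wtw8 (A ^ 2) + wtw8 (B ^ 2) := by decide

private lemma wtw2_le : ∀ z, wtw2 z ≤ 1 := by decide
private lemma wtw4_le : ∀ z, wtw4 z ≤ 2 := by decide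
private lemma wtw8_le : ∀ q, wtw8 q ≤ 4 := by decide
private lemma wtw2_eq : ∀ z, wtw2 z = 1 → z = Multiplicative.ofAdd (1 : ZMod 2) := by decide
private lemma wtw4_eq : ∀ z, wtw4 z = 2 → z = Multiplicative.ofAdd (2 : ZMod 4) := by decide
private lemma wtw8_eq : ∀ q, wtw8 q = 4 → q = QuaternionGroup.a 2 := by decide
private lemma wtw2_u : wtw2 (Multiplicative.ofAdd (1 : ZMod 2)) = 1 := by decide
private lemma wtw4_u : wtw4 (Multiplicative.ofAdd (2 : ZMod 4)) = 2 := by decide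
private lemma wtw8_u : wtw8 (QuaternionGroup.a 2) = 4 := by decide
private lemma wtw2_one : wtw2 1 = 0 := by decide
private lemma wtw4_one : wtw4 1 = 0 := by decide
private lemma wtw8_one : wtw8 1 = 0 := by decide

private lemma wtG_one {k1 k2 k3 : ℕ} : wtG (1 : Gq k1 k2 k3) = 0 := by
  rw [wtG_eq]
  simp only [Prod.fst_one, Prod.snd_one, Pi.one_apply, wtw2_one, wtw4_one, wtw8_one]
  simp

private lemma wtG_u {k1 k2 k3 : ℕ} : wtG (uG k1 k2 k3) = k1 + 2 * k2 + 4 * k3 := by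
  rw [wtG_eq]
  simp [uG, wtw2_u, wtw4_u, wtw8_u, Finset.sum_const, Finset.card_univ]
  ring

private lemma wtG_eq_n_imp {k1 k2 k3 : ℕ} (x : Gq k1 k2 k3)
    (h : wtG x = k1 + 2 * k2 + 4 * k3) : x = uG k1 k2 k3 := by
  rw [wtG_eq] at h
  have h2 : (∑ i, wtw2 (x.1 i)) ≤ k1 := by
    calc (∑ i, wtw2 (x.1 i)) ≤ ∑ _i : Fin k1, 1 :=
          Finset.sum_le_sum fun i _ => wtw2_le _
      _ = k1 := by simp
  have h4 : (∑ j, wtw4 (x.2.1 j)) ≤ 2 * k2 := by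
    calc (∑ j, wtw4 (x.2.1 j)) ≤ ∑ _j : Fin k2, 2 :=
          Finset.sum_le_sum fun j _ => wtw4_le _
      _ = 2 * k2 := by simp [mul_comm]
  have h8 : (∑ j, wtw8 (x.2.2 j)) ≤ 4 * k3 := by
    calc (∑ j, wtw8 (x.2.2 j)) ≤ ∑ _j : Fin k3, 4 :=
          Finset.sum_le_sum fun j _ => wtw8_le _
      _ = 4 * k3 := by simp [mul_comm]
  have e2 : (∑ i, wtw2 (x.1 i)) = ∑ _i : Fin k1, 1 := by simp; omega
  have e4 : (∑ j, wtw4 (x.2.1 j)) = ∑ _j : Fin k2, 2 := by simp; omega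
  have e8 : (∑ j, wtw8 (x.2.2 j)) = ∑ _j : Fin k3, 4 := by simp; omega
  have p2 := (Finset.sum_eq_sum_iff_of_le fun i _ => wtw2_le (x.1 i)).mp e2
  have p4 := (Finset.sum_eq_sum_iff_of_le fun j _ => wtw4_le (x.2.1 j)).mp e4
  have p8 := (Finset.sum_eq_sum_iff_of_le fun j _ => wtw8_le (x.2.2 j)).mp e8
  refine Prod.ext ?_ (Prod.ext ?_ ?_)
  · funext i; exact wtw2_eq _ (p2 i (Finset.mem_univ i))
  · funext j; exact wtw4_eq _ (p4 j (Finset.mem_univ j))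
  · funext j; exact wtw8_eq _ (p8 j (Finset.mem_univ j))

/-- Hadamard-code lemma: if a, b, c ∈ C have order 4, b² = c² = [b,c] and a commutes with
b and c, then (ab)² = (ac)² = u and none of a², b², c² equals u. -/
theorem stmt_18 (k1 k2 k3 : ℕ) (C : Subgroup (Gq k1 k2 k3))
    (n : ℕ) (hn : n = k1 + 2 * k2 + 4 * k3) (hn4 : 4 < n)
    (hHad : ∀ x ∈ C, x ≠ 1 → 2 * wtG x = n ∨ wtG x = n)
    (a b c : Gq k1 k2 k3) (ha : a ∈ C) (hb : b ∈ C) (hc : c ∈ C)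
    (ha4 : orderOf a = 4) (hb4 : orderOf b = 4) (hc4 : orderOf c = 4)
    (hbc : b ^ 2 = c ^ 2) (hbcc : b ^ 2 = ⁅b, c⁆)
    (hab : ⁅a, b⁆ = 1) (hac : ⁅a, c⁆ = 1) :
    (a * b) ^ 2 = uG k1 k2 k3 ∧ (a * c) ^ 2 = uG k1 k2 k3 ∧
      a ^ 2 ≠ uG k1 k2 k3 ∧ b ^ 2 ≠ uG k1 k2 k3 ∧ c ^ 2 ≠ uG k1 k2 k3 := by
  have hcab : Commute a b := commutatorElement_eq_one_iff_mul_comm.mp hab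
  have hcac : Commute a c := commutatorElement_eq_one_iff_mul_comm.mp hac
  have hab2 : (a * b) ^ 2 = a ^ 2 * b ^ 2 := hcab.mul_pow 2
  have hac2 : (a * c) ^ 2 = a ^ 2 * c ^ 2 := hcac.mul_pow 2
  have hacab : (a * c) ^ 2 = (a * b) ^ 2 := by rw [hab2, hac2, hbc]
  have ha2ne : a ^ 2 ≠ 1 := by
    intro h
    have h' := orderOf_dvd_of_pow_eq_one h
    rw [ha4] at h'
    omega
  have hb2ne : b ^ 2 ≠ 1 := by
    intro h
    have h' := orderOf_dvd_of_pow_eq_one h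
    rw [hb4] at h'
    omega
  have key : wtG ((a * b) ^ 2) = wtG (a ^ 2) + wtG (b ^ 2) := by
    rw [wtG_eq, wtG_eq, wtG_eq]
    have s2 : (∑ i, wtw2 (((a * b) ^ 2).1 i))
        = (∑ i, wtw2 ((a ^ 2).1 i)) + (∑ i, wtw2 ((b ^ 2).1 i)) := by
      rw [← Finset.sum_add_distrib]
      exact Finset.sum_congr rfl fun i _ => lem2 (a.1 i) (b.1 i)
    have s4 : (∑ j, wtw4 (((a * b) ^ 2).2.1 j))
        = (∑ j, wtw4 ((a ^ 2).2.1 j)) + (∑ j, wtw4 ((b ^ 2).2.1 j)) := by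
      rw [← Finset.sum_add_distrib]
      exact Finset.sum_congr rfl fun j _ =>
        lem4 (a.2.1 j) (b.2.1 j) (c.2.1 j)
          (congrFun (congrArg (fun t : Gq k1 k2 k3 => t.2.1) hbcc) j)
    have s8 : (∑ j, wtw8 (((a * b) ^ 2).2.2 j))
        = (∑ j, wtw8 ((a ^ 2).2.2 j)) + (∑ j, wtw8 ((b ^ 2).2.2 j)) := by
      rw [← Finset.sum_add_distrib]
      exact Finset.sum_congr rfl fun j _ =>
        lem8 (a.2.2 j) (b.2.2 j) (c.2.2 j)
          (congrFun (congrArg (fun t : Gq k1 k2 k3 => t.2.2) hbc) j)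
          (congrFun (congrArg (fun t : Gq k1 k2 k3 => t.2.2) hbcc) j)
          (congrFun (congrArg (fun t : Gq k1 k2 k3 => t.2.2) hab) j)
          (congrFun (congrArg (fun t : Gq k1 k2 k3 => t.2.2) hac) j)
    omega
  have hA := hHad _ (pow_mem ha 2) ha2ne
  have hB := hHad _ (pow_mem hb 2) hb2ne
  have habne : (a * b) ^ 2 ≠ 1 := by
    intro h
    rw [h, wtG_one] at key
    omega
  have hAB := hHad _ (pow_mem (mul_mem ha hb) 2) habne
  have harith : wtG ((a * b) ^ 2) = n ∧ 2 * wtG (a ^ 2) = n ∧ 2 * wtG (b ^ 2) = n := by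
    omega
  have hu : (a * b) ^ 2 = uG k1 k2 k3 := by
    apply wtG_eq_n_imp
    rw [harith.1, hn]
  refine ⟨hu, hacab.trans hu, ?_, ?_, ?_⟩
  · intro h
    have hw : wtG (a ^ 2) = k1 + 2 * k2 + 4 * k3 := by rw [h, wtG_u]
    have := harith.2.1
    omega
  · intro h
    have hw : wtG (b ^ 2) = k1 + 2 * k2 + 4 * k3 := by rw [h, wtG_u]
    have := harith.2.2
    omega
  · intro h
    rw [← hbc] at h
    have hw : wtG (b ^ 2) = k1 + 2 * k2 + 4 * k3 := by rw [h, wtG_u]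
    have := harith.2.2
    omega
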